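/- Let G be a Hausdorff topological group and N a filter-base of h-complete normal subgroups of G such that the natural (diagonal) homomorphism from G into the product of the quotients G/N over N in the filter-base is a topological embedding. If each quotient G/N is totally minimal, then G is totally minimal. -/

import Mathlib

open Topology Filter

universe u v

/-- A Hausdorff topological group is h-complete if its image under every continuous
homomorphism into a Hausdorff topological group is closed. -/
def IsHComplete (G : Type u) [Group G] [TopologicalSpace G] : Prop :=
  ∀ (H : Type v) [Group H] [TopologicalSpace H] [IsTopologicalGroup H] [T2Space H]
    (f : G →* H), Continuous f → IsClosed (Set.range f)

/-- A Hausdorff topological group is totally minimal if every continuous surjective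
homomorphism onto a Hausdorff topological group is open. -/
def IsTotallyMinimal (G : Type u) [Group G] [TopologicalSpace G] : Prop :=
  ∀ (H : Type v) [Group H] [TopologicalSpace H] [IsTopologicalGroup H] [T2Space H]
    (f : G →* H), Continuous f → Function.Surjective f → IsOpenMap f

theorem totallyMinimal_of_subdirect {G : Type u}
    [Group G] [TopologicalSpace G] [IsTopologicalGroup G] [T2Space G]
    {ι : Type u} [Nonempty ι] (N : ι → Subgroup G) [∀ i, (N i).Normal]
    -- the family is a filter-base
    (hbase : ∀ i j : ι, ∃ k : ι, N k ≤ N i ⊓ N j)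
    -- each member is h-complete (as a topological subgroup of `G`)
    (hcomp : ∀ i, IsHComplete.{u, u} (N i))
    -- the natural diagonal homomorphism into the product of the quotients is a
    -- topological embedding
    (hemb : Topology.IsEmbedding (fun g : G => fun i : ι => ((QuotientGroup.mk g : G ⧸ N i))))
    -- each quotient is totally minimal
    (htm : ∀ i, IsTotallyMinimal.{u, u} (G ⧸ N i)) :
    IsTotallyMinimal.{u, u} G := by
  -- The filters `comap mk_i (𝓝 1)` form a directed family whose infimum is `𝓝 1`.
  have hdir : Directed (· ≥ ·)
      fun i => Filter.comap (QuotientGroup.mk : G → G ⧸ N i) (𝓝 1) := by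
    intro i j
    obtain ⟨k, hk⟩ := hbase i j
    have key : ∀ l : ι, N k ≤ N l →
        Filter.comap (QuotientGroup.mk : G → G ⧸ N k) (𝓝 1) ≤
          Filter.comap (QuotientGroup.mk : G → G ⧸ N l) (𝓝 1) := by
      intro l hl
      set φ : G ⧸ N k →* G ⧸ N l :=
        QuotientGroup.map (N k) (N l) (MonoidHom.id G) (fun x hx => hl hx) with hφ
      have hφc : Continuous φ :=
        ((QuotientGroup.isQuotientMap_mk (N k)).continuous_iff).mpr
          QuotientGroup.continuous_mk
      have hcomp' : (QuotientGroup.mk : G → G ⧸ N l) =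
          φ ∘ (QuotientGroup.mk : G → G ⧸ N k) := by
        funext g; rfl
      have htend : Filter.Tendsto φ (𝓝 1) (𝓝 1) := by
        simpa using hφc.tendsto (1 : G ⧸ N k)
      calc Filter.comap (QuotientGroup.mk : G → G ⧸ N k) (𝓝 1)
          ≤ Filter.comap (QuotientGroup.mk : G → G ⧸ N k) (Filter.comap φ (𝓝 1)) :=
            Filter.comap_mono (Filter.map_le_iff_le_comap.mp htend)
        _ = Filter.comap (QuotientGroup.mk : G → G ⧸ N l) (𝓝 1) := by
            rw [Filter.comap_comap, ← hcomp']
    exact ⟨k, key i (hk.trans inf_le_left), key j (hk.trans inf_le_right)⟩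
  have hnhds : 𝓝 (1 : G) =
      ⨅ i, Filter.comap (QuotientGroup.mk : G → G ⧸ N i) (𝓝 1) := by
    rw [hemb.toIsInducing.nhds_eq_comap, nhds_pi, Filter.pi, Filter.comap_iInf]
    exact iInf_congr fun i => by rw [Filter.comap_comap]; rfl
  -- Now the main argument.
  intro H _ _ _ _ f hf hsurj
  -- images of the `N i` in `H`
  haveI hMn : ∀ i, ((N i).map f).Normal := fun i =>
    Subgroup.Normal.map inferInstance f hsurj
  have hMc : ∀ i, IsClosed (((N i).map f : Subgroup H) : Set H) := by
    intro i
    have h1 := hcomp i H (f.comp (N i).subtype) (hf.comp continuous_subtype_val)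
    have h2 : Set.range (f.comp (N i).subtype) = (((N i).map f : Subgroup H) : Set H) := by
      rw [Subgroup.coe_map, MonoidHom.coe_comp, Set.range_comp, Subgroup.coe_subtype,
        Subtype.range_coe]
    rwa [h2] at h1
  have hT2 : ∀ i, T2Space (H ⧸ (N i).map f) := fun i => by
    haveI : IsClosed (((N i).map f : Subgroup H) : Set H) := hMc i
    infer_instance
  -- the induced maps on quotients
  set ψ : ∀ i, G ⧸ N i →* H ⧸ (N i).map f := fun i =>
    QuotientGroup.map (N i) ((N i).map f) f (fun x hx => Subgroup.mem_comap.mpr (Subgroup.mem_map_of_mem f hx)) with hψ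
  have hψc : ∀ i, Continuous (ψ i) := fun i =>
    ((QuotientGroup.isQuotientMap_mk (N i)).continuous_iff).mpr
      (QuotientGroup.continuous_mk.comp hf)
  have hψs : ∀ i, Function.Surjective (ψ i) := by
    intro i y
    obtain ⟨x, rfl⟩ := QuotientGroup.mk_surjective y
    obtain ⟨g, rfl⟩ := hsurj x
    exact ⟨QuotientGroup.mk g, rfl⟩
  have hψo : ∀ i, IsOpenMap (ψ i) := fun i => by
    haveI := hT2 i
    exact htm i (H ⧸ (N i).map f) (ψ i) (hψc i) (hψs i)
  -- prove `f` is open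
  intro U hU
  rw [isOpen_iff_mem_nhds]
  rintro _ ⟨g, hg, rfl⟩
  set V : Set G := (fun x => g * x) ⁻¹' U with hV
  have hVopen : IsOpen V := hU.preimage (continuous_const.mul continuous_id)
  have hV1 : (1 : G) ∈ V := by simp [hV, hg]
  have hVnhds : V ∈ 𝓝 (1 : G) := hVopen.mem_nhds hV1
  rw [hnhds] at hVnhds
  obtain ⟨i, hVi⟩ := Filter.mem_iInf_of_directed hdir V |>.mp hVnhds
  obtain ⟨W', hW', hWsub'⟩ := Filter.mem_comap.mp hVi
  obtain ⟨W, hWsub, hWopen, hW1⟩ := mem_nhds_iff.mp hW'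
  have hsubV : (QuotientGroup.mk : G → G ⧸ N i) ⁻¹' W ⊆ V :=
    (Set.preimage_mono hWsub).trans hWsub'
  -- the saturation identity
  have hsat : f '' ((QuotientGroup.mk : G → G ⧸ N i) ⁻¹' W) =
      (QuotientGroup.mk : H → H ⧸ (N i).map f) ⁻¹' (ψ i '' W) := by
    ext x
    constructor
    · rintro ⟨a, ha, rfl⟩
      exact ⟨QuotientGroup.mk a, ha, rfl⟩
    · intro hx
      obtain ⟨w, hw, hwx⟩ := hx
      obtain ⟨a, rfl⟩ := QuotientGroup.mk_surjective w
      have heq : (QuotientGroup.mk (f a) : H ⧸ (N i).map f) = QuotientGroup.mk x := hwx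
      rw [QuotientGroup.eq] at heq
      obtain ⟨n, hn, hfn⟩ := Subgroup.mem_map.mp heq
      refine ⟨a * n, ?_, ?_⟩
      · show (QuotientGroup.mk (a * n) : G ⧸ N i) ∈ W
        have : (QuotientGroup.mk (a * n) : G ⧸ N i) = QuotientGroup.mk a := by
          rw [QuotientGroup.eq]
          simpa using (N i).inv_mem hn
        rwa [this]
      · rw [map_mul, hfn]
        group
  have hS : IsOpen (f '' ((QuotientGroup.mk : G → G ⧸ N i) ⁻¹' W)) := by
    rw [hsat]
    exact (hψo i W hWopen).preimage QuotientGroup.continuous_mk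
  have hS1 : (1 : H) ∈ f '' ((QuotientGroup.mk : G → G ⧸ N i) ⁻¹' W) :=
    ⟨1, by simpa using hW1, map_one f⟩
  -- translate by `f g`
  refine mem_nhds_iff.mpr ⟨(fun y => f g * y) '' (f '' ((QuotientGroup.mk : G → G ⧸ N i) ⁻¹' W)),
    ?_, (isOpenMap_mul_left (f g)) _ hS, ⟨1, hS1, by simp⟩⟩
  rintro _ ⟨_, ⟨a, ha, rfl⟩, rfl⟩
  exact ⟨g * a, hsubV ha, by simp⟩
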